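/- Let f(X) ∈ F[X] be a polynomial of degree greater than 1 and let x ∈ Δ2. Then f(x) ∈ Δ2 and f(x) is unsolvable. (Claim at the end of Section 3) -/

import Mathlib

open scoped BigOperators
set_option linter.unusedSectionVars false

/-- Defining relation of the Weyl algebra: `p * q = q * p + 1`. -/
inductive WeylRel (F : Type*) [CommRing F] :
    FreeAlgebra F (Fin 2) → FreeAlgebra F (Fin 2) → Prop
  | comm : WeylRel F (FreeAlgebra.ι F 0 * FreeAlgebra.ι F 1)
      (FreeAlgebra.ι F 1 * FreeAlgebra.ι F 0 + 1)

/-- The Weyl algebra over `F`. -/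
abbrev WeylAlgebra (F : Type*) [CommRing F] := RingQuot (WeylRel F)

variable (F : Type*) [Field F] [CharZero F]

/-- The generator `p` of the Weyl algebra. -/
noncomputable def Wp : WeylAlgebra F :=
  RingQuot.mkAlgHom F (WeylRel F) (FreeAlgebra.ι F 0)

/-- The generator `q` of the Weyl algebra. -/
noncomputable def Wq : WeylAlgebra F :=
  RingQuot.mkAlgHom F (WeylRel F) (FreeAlgebra.ι F 1)

/-- `x` is solvable if `[x, y] = 1` for some `y`. -/
def Solvable (x : WeylAlgebra F) : Prop := ∃ y : WeylAlgebra F, x * y - y * x = 1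

/-- The centralizer `C(x)`. -/
def Cset (x : WeylAlgebra F) : Set (WeylAlgebra F) := {y | x * y - y * x = 0}

/-- `N(x) = {y | (ad x)^n y = 0 for some n ≥ 1}`. -/
def Nset (x : WeylAlgebra F) : Set (WeylAlgebra F) :=
  {y | ∃ n : ℕ, 1 ≤ n ∧ (fun z => x * z - z * x)^[n] y = 0}

/-- `D(x) = {y | [x,y] = λ y for some scalar λ}`. -/
def Dset (x : WeylAlgebra F) : Set (WeylAlgebra F) :=
  {y | ∃ c : F, x * y - y * x = c • y}

def Delta1 : Set (WeylAlgebra F) :=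
  {x | x ∉ Set.range (algebraMap F (WeylAlgebra F)) ∧
    Nset F x = Set.univ ∧ Dset F x = Cset F x}

def Delta2 : Set (WeylAlgebra F) :=
  {x | x ∉ Set.range (algebraMap F (WeylAlgebra F)) ∧
    Nset F x ≠ Set.univ ∧ Nset F x ≠ Cset F x ∧ Dset F x = Cset F x}

/-- The graded component `A_s = {a | [pq, a] = s • a}`. -/
def Wgrade (s : ℤ) : Set (WeylAlgebra F) :=
  {a | (Wp F * Wq F) * a - a * (Wp F * Wq F) = s • a}

/-- The monomial `p^i q^j`. -/
noncomputable def Wmono (i j : ℕ) : WeylAlgebra F := Wp F ^ i * Wq F ^ j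

/-- `α` is the coordinate family of `x` in the basis `p^i q^j`. -/
def Represents (α : (ℕ × ℕ) →₀ F) (x : WeylAlgebra F) : Prop :=
  x = α.sum fun ij c => c • Wmono F ij.1 ij.2

/-- `v_{ρ,σ}(x) = max { iρ + jσ | (i,j) ∈ E(x) }`. -/
def vdeg (α : (ℕ × ℕ) →₀ F) (ρ σ : ℕ) : ℕ :=
  α.support.sup fun ij => ij.1 * ρ + ij.2 * σ

/-- `E_{ρ,σ}(x)`. -/
def Eset (α : (ℕ × ℕ) →₀ F) (ρ σ : ℕ) : Finset (ℕ × ℕ) :=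
  α.support.filter fun ij => ij.1 * ρ + ij.2 * σ = vdeg F α ρ σ

/-- The `(ρ,σ)`-polynomial of `x`, an element of `F[X,Y]`. -/
noncomputable def wpoly (α : (ℕ × ℕ) →₀ F) (ρ σ : ℕ) : MvPolynomial (Fin 2) F :=
  ∑ ij ∈ Eset F α ρ σ,
    MvPolynomial.monomial (Finsupp.single 0 ij.1 + Finsupp.single 1 ij.2) (α ij)

/-- The `(ρ,σ)`-term of `x`, an element of the Weyl algebra. -/
noncomputable def wterm (α : (ℕ × ℕ) →₀ F) (ρ σ : ℕ) : WeylAlgebra F :=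
  ∑ ij ∈ Eset F α ρ σ, α ij • Wmono F ij.1 ij.2


namespace WeylAux

open MvPolynomial

abbrev P := MvPolynomial (Fin 2) F

/-- the operator `∂_{X₀} + X₁·` -/
noncomputable def mpE : Module.End F (P F) :=
  (pderiv 0).toLinearMap + LinearMap.mulLeft F (X 1)

/-- the operator `X₀·` -/
noncomputable def mqE : Module.End F (P F) :=
  LinearMap.mulLeft F (X 0)

lemma weyl_rel_End : mpE F * mqE F = mqE F * mpE F + 1 := by
  apply LinearMap.ext
  intro g
  simp only [mpE, mqE, Module.End.mul_apply, LinearMap.add_apply, LinearMap.mulLeft_apply,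
    Derivation.coeFn_coe, Module.End.one_apply]
  rw [Derivation.leibniz]
  simp only [pderiv_X_self, smul_eq_mul, one_mul]
  ring

/-- The standard representation of the Weyl algebra on `F[X₀,X₁]`. -/
noncomputable def rep : WeylAlgebra F →ₐ[F] Module.End F (P F) :=
  RingQuot.liftAlgHom F ⟨FreeAlgebra.lift F ![mpE F, mqE F], by
    intro a b h
    cases h
    simp only [map_mul, map_add, map_one, FreeAlgebra.lift_ι_apply]
    simpa using weyl_rel_End F⟩

lemma rep_Wp : rep F (Wp F) = mpE F := by
  simp [rep, Wp, RingQuot.liftAlgHom_mkAlgHom_apply]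

lemma rep_Wq : rep F (Wq F) = mqE F := by
  simp [rep, Wq, RingQuot.liftAlgHom_mkAlgHom_apply]

/-- our basis family: `q^j * p^i`, indexed by `(j,i)`. -/
noncomputable def bw (μ : ℕ × ℕ) : WeylAlgebra F := Wq F ^ μ.1 * Wp F ^ μ.2

lemma mpE_pow_one (i : ℕ) : (mpE F ^ i) 1 = (X 1 : P F) ^ i := by
  induction i with
  | zero => simp
  | succ k ih =>
      rw [pow_succ', Module.End.mul_apply, ih]
      simp only [mpE, LinearMap.add_apply, LinearMap.mulLeft_apply, Derivation.coeFn_coe]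
      rw [Derivation.leibniz_pow]
      simp [pderiv_X_of_ne (show (1 : Fin 2) ≠ 0 by decide), pow_succ, mul_comm]

lemma eps_bw (μ : ℕ × ℕ) :
    rep F (bw F μ) 1 = (X 0 : P F) ^ μ.1 * (X 1 : P F) ^ μ.2 := by
  obtain ⟨j, i⟩ := μ
  simp only [bw, map_mul, map_pow, rep_Wp, rep_Wq, Module.End.mul_apply]
  rw [mpE_pow_one]
  simp only [mqE]
  rw [LinearMap.pow_mulLeft, LinearMap.mulLeft_apply]

/-- `ε : A → F[X₀,X₁]`, `a ↦ (rep a) 1`. -/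
noncomputable def eps : WeylAlgebra F →ₗ[F] P F where
  toFun a := rep F a 1
  map_add' a b := by simp
  map_smul' c a := by simp

lemma linearIndependent_bw : LinearIndependent F (bw F) := by
  apply LinearIndependent.of_comp (eps F)
  have h1 : (eps F) ∘ (bw F) = fun μ : ℕ × ℕ =>
      (MvPolynomial.monomial (Finsupp.single 0 μ.1 + Finsupp.single 1 μ.2)) (1 : F) := by
    funext μ
    simp only [Function.comp_apply, eps, LinearMap.coe_mk, AddHom.coe_mk]
    rw [eps_bw]
    rw [X_pow_eq_monomial, X_pow_eq_monomial, monomial_mul, one_mul]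
  rw [h1]
  have h2 : LinearIndependent F (fun s : Fin 2 →₀ ℕ => (MvPolynomial.monomial s) (1 : F)) := by
    have := (MvPolynomial.basisMonomials (Fin 2) F).linearIndependent
    rwa [MvPolynomial.coe_basisMonomials] at this
  apply h2.comp
  intro μ ν h
  have h0 := congrArg (fun g : Fin 2 →₀ ℕ => g 0) h
  have h1' := congrArg (fun g : Fin 2 →₀ ℕ => g 1) h
  simp [Finsupp.single_apply] at h0 h1'
  exact Prod.ext h0 h1'

end WeylAux

namespace WeylAux2
open WeylAux

variable {F}

section CommId

/-- The defining relation inside the Weyl algebra. -/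
lemma pq_rel : Wp F * Wq F = Wq F * Wp F + 1 := by
  have h := RingQuot.mkAlgHom_rel F (WeylRel.comm (F := F))
  simpa only [map_mul, map_add, map_one, Wp, Wq] using h

lemma p_pow_mul_q (i : ℕ) :
    Wp F ^ (i + 1) * Wq F = Wq F * Wp F ^ (i + 1) + (i + 1) • Wp F ^ i := by
  induction i with
  | zero => simpa using pq_rel (F := F)
  | succ k ih =>
      have : Wp F ^ (k + 2) * Wq F = Wp F * (Wp F ^ (k + 1) * Wq F) := by
        rw [← mul_assoc, ← pow_succ']
      rw [this, ih, mul_add, ← mul_assoc, pq_rel]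
      have e1 : Wp F * ((k + 1) • Wp F ^ k) = (k + 1) • Wp F ^ (k + 1) := by
        rw [mul_smul_comm, ← pow_succ']
      rw [add_mul, one_mul, mul_assoc, ← pow_succ', e1]
      have e2 : (k + 1 + 1) • Wp F ^ (k + 1) = (k + 1) • Wp F ^ (k + 1) + Wp F ^ (k + 1) :=
        succ_nsmul _ _
      rw [e2]
      abel
end CommId

section Span

/-- the span of the `bw` family -/
noncomputable def S : Submodule F (WeylAlgebra F) := Submodule.span F (Set.range (bw F))

lemma bw_mem_S (μ : ℕ × ℕ) : bw F μ ∈ S (F := F) :=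
  Submodule.subset_span (Set.mem_range_self μ)

lemma one_mem_S : (1 : WeylAlgebra F) ∈ S (F := F) := by
  have : bw F (0, 0) = 1 := by simp [bw]
  rw [← this]; exact bw_mem_S _

lemma S_mul_p {a : WeylAlgebra F} (ha : a ∈ S (F := F)) : a * Wp F ∈ S (F := F) := by
  induction ha using Submodule.span_induction with
  | mem z hz =>
      obtain ⟨⟨j, i⟩, rfl⟩ := hz
      have : bw F (j, i) * Wp F = bw F (j, i + 1) := by
        simp [bw, mul_assoc, pow_succ]
      rw [this]; exact bw_mem_S _
  | zero => simpa using (S (F := F)).zero_mem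
  | add y z _ _ hy hz => rw [add_mul]; exact (S (F := F)).add_mem hy hz
  | smul c y _ hy => rw [smul_mul_assoc]; exact (S (F := F)).smul_mem c hy

lemma S_mul_q {a : WeylAlgebra F} (ha : a ∈ S (F := F)) : a * Wq F ∈ S (F := F) := by
  induction ha using Submodule.span_induction with
  | mem z hz =>
      obtain ⟨⟨j, i⟩, rfl⟩ := hz
      match i with
      | 0 =>
          have : bw F (j, 0) * Wq F = bw F (j + 1, 0) := by
            simp [bw, pow_succ]
          rw [this]; exact bw_mem_S _
      | Nat.succ k =>
          have : bw F (j, k + 1) * Wq F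
              = bw F (j + 1, k + 1) + (k + 1) • bw F (j, k) := by
            simp only [bw, mul_assoc]
            rw [p_pow_mul_q k]
            rw [mul_add, mul_smul_comm]
            rw [← mul_assoc, ← pow_succ]
          rw [this]
          exact (S (F := F)).add_mem (bw_mem_S _) ((S (F := F)).smul_mem _ (bw_mem_S _))
  | zero => simpa using (S (F := F)).zero_mem
  | add y z _ _ hy hz => rw [add_mul]; exact (S (F := F)).add_mem hy hz
  | smul c y _ hy => rw [smul_mul_assoc]; exact (S (F := F)).smul_mem c hy

/-- elements whose right multiplication preserves `S`. -/
noncomputable def CR : Subalgebra F (WeylAlgebra F) where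
  carrier := {c | ∀ a ∈ S (F := F), a * c ∈ S (F := F)}
  mul_mem' := by
    intro c d hc hd a ha
    rw [← mul_assoc]
    exact hd _ (hc _ ha)
  add_mem' := by
    intro c d hc hd a ha
    rw [mul_add]
    exact (S (F := F)).add_mem (hc _ ha) (hd _ ha)
  one_mem' := by intro a ha; simpa using ha
  zero_mem' := by intro a ha; simpa using (S (F := F)).zero_mem
  algebraMap_mem' := by
    intro c a ha
    have : a * (algebraMap F (WeylAlgebra F)) c = c • a := by
      rw [Algebra.algebraMap_eq_smul_one, mul_smul_comm, mul_one]
    rw [this]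
    exact (S (F := F)).smul_mem c ha

lemma adjoin_pq_top : Algebra.adjoin F ({Wp F, Wq F} : Set (WeylAlgebra F)) = ⊤ := by
  have hsurj := RingQuot.mkAlgHom_surjective F (WeylRel F)
  have h1 : Algebra.adjoin F (Set.range (FreeAlgebra.ι F (X := Fin 2))) = ⊤ :=
    FreeAlgebra.adjoin_range_ι F (Fin 2)
  have h2 : (Algebra.adjoin F (Set.range (FreeAlgebra.ι F (X := Fin 2)))).map
      (RingQuot.mkAlgHom F (WeylRel F)) = ⊤ := by
    rw [h1, Algebra.map_top, AlgHom.range_eq_top]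
    exact hsurj
  rw [AlgHom.map_adjoin] at h2
  have h3 : (RingQuot.mkAlgHom F (WeylRel F)) '' (Set.range (FreeAlgebra.ι F (X := Fin 2)))
      = {Wp F, Wq F} := by
    ext z
    constructor
    · rintro ⟨_, ⟨i, rfl⟩, rfl⟩
      fin_cases i
      · left; rfl
      · right; rfl
    · rintro (rfl | rfl)
      · exact ⟨_, ⟨0, rfl⟩, rfl⟩
      · exact ⟨_, ⟨1, rfl⟩, rfl⟩
  rwa [h3] at h2

lemma S_eq_top : S (F := F) = ⊤ := by
  have hCR : CR (F := F) = ⊤ := by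
    rw [← top_le_iff, ← adjoin_pq_top]
    apply Algebra.adjoin_le
    rintro z (rfl | rfl)
    · exact fun a ha => S_mul_p ha
    · exact fun a ha => S_mul_q ha
  rw [eq_top_iff]
  intro a _
  have haCR : a ∈ CR (F := F) := hCR ▸ Algebra.mem_top
  simpa using haCR 1 one_mem_S

/-- The PBW basis `q^j p^i` of the Weyl algebra. -/
noncomputable def bB : Module.Basis (ℕ × ℕ) F (WeylAlgebra F) :=
  Module.Basis.mk (linearIndependent_bw F) (by change ⊤ ≤ S (F := F); rw [S_eq_top])

lemma bB_apply (μ : ℕ × ℕ) : bB (F := F) μ = bw F μ := Module.Basis.mk_apply _ _ _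

end Span
end WeylAux2

namespace WeylAux3
open WeylAux WeylAux2

variable {F}

/-- coordinates w.r.t. the PBW basis -/
noncomputable def co (a : WeylAlgebra F) : (ℕ × ℕ) →₀ F := (bB (F := F)).repr a

def wdeg (μ : ℕ × ℕ) : ℕ := μ.1 + μ.2

lemma co_add (a b : WeylAlgebra F) : co (a + b) = co a + co b := by simp [co]

lemma co_smul (c : F) (a : WeylAlgebra F) : co (c • a) = c • co a := by simp [co]

lemma co_eq_zero_iff {a : WeylAlgebra F} : co a = 0 ↔ a = 0 := by
  rw [co]; exact (bB (F := F)).repr.map_eq_zero_iff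

lemma co_bw (μ : ℕ × ℕ) : co (bw F μ) = Finsupp.single μ 1 := by
  rw [co, ← bB_apply, Module.Basis.repr_self]

/-- `Ale d` : the elements of PBW-degree at most `d`. -/
noncomputable def Ale (d : ℕ) : Submodule F (WeylAlgebra F) where
  carrier := {a | ∀ μ ∈ (co a).support, wdeg μ ≤ d}
  add_mem' := by
    intro a b ha hb μ hμ
    rw [co_add] at hμ
    rcases Finset.mem_union.mp (Finsupp.support_add hμ) with h | h
    · exact ha μ h
    · exact hb μ h
  zero_mem' := by
    intro μ hμ
    rw [co_eq_zero_iff.mpr rfl] at hμ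
    simp at hμ
  smul_mem' := by
    intro c a ha μ hμ
    rw [co_smul] at hμ
    exact ha μ (Finsupp.support_smul hμ)

/-- the degree of an element (0 if a = 0). -/
noncomputable def v (a : WeylAlgebra F) : ℕ := (co a).support.sup wdeg

lemma mem_Ale_iff {a : WeylAlgebra F} {d : ℕ} :
    a ∈ Ale (F := F) d ↔ ∀ μ ∈ (co a).support, wdeg μ ≤ d := Iff.rfl

lemma v_le_iff {a : WeylAlgebra F} {d : ℕ} : v a ≤ d ↔ a ∈ Ale (F := F) d := by
  rw [mem_Ale_iff, v, Finset.sup_le_iff]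

lemma mem_Ale_v (a : WeylAlgebra F) : a ∈ Ale (F := F) (v a) := v_le_iff.mp le_rfl

lemma Ale_mono {d e : ℕ} (h : d ≤ e) : Ale (F := F) d ≤ Ale (F := F) e := by
  intro a ha μ hμ
  exact le_trans (ha μ hμ) h

lemma bw_mem_Ale {μ : ℕ × ℕ} {d : ℕ} : bw F μ ∈ Ale (F := F) d ↔ wdeg μ ≤ d := by
  rw [mem_Ale_iff, co_bw]
  constructor
  · intro h; exact h μ (by simp)
  · intro h ν hν
    rw [Finsupp.support_single_ne_zero μ one_ne_zero] at hν
    rcases Finset.mem_singleton.mp hν with rfl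
    exact h

lemma v_bw (μ : ℕ × ℕ) : v (bw F μ) = wdeg μ := by
  rw [v, co_bw, Finsupp.support_single_ne_zero μ one_ne_zero, Finset.sup_singleton]

lemma co_eq_zero_of_mem_Ale {a : WeylAlgebra F} {d : ℕ} {μ : ℕ × ℕ}
    (ha : a ∈ Ale (F := F) d) (h : d < wdeg μ) : co a μ = 0 := by
  by_contra hc
  exact absurd (ha μ (Finsupp.mem_support_iff.mpr hc)) (by omega)

lemma exists_wdeg_eq_v {a : WeylAlgebra F} (ha : a ≠ 0) :
    ∃ μ ∈ (co a).support, wdeg μ = v a := by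
  have hne : (co a).support.Nonempty := by
    rw [Finsupp.support_nonempty_iff]
    exact fun h => ha (co_eq_zero_iff.mp h)
  obtain ⟨μ, hμ, h⟩ := Finset.exists_mem_eq_sup (co a).support hne wdeg
  exact ⟨μ, hμ, h.symm⟩

/-- Dominant term principle. -/
lemma dom_add {s t : WeylAlgebra F} (hs : s ≠ 0) (hvs : 1 ≤ v s)
    (ht : t ∈ Ale (F := F) (v s - 1)) : s + t ≠ 0 ∧ v (s + t) = v s := by
  obtain ⟨μ, hμ, hdeg⟩ := exists_wdeg_eq_v hs
  have hco : co (s + t) μ = co s μ := by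
    rw [co_add, Finsupp.add_apply, co_eq_zero_of_mem_Ale ht (by omega), add_zero]
  have hμmem : μ ∈ (co (s + t)).support := by
    rw [Finsupp.mem_support_iff, hco]
    exact Finsupp.mem_support_iff.mp hμ
  constructor
  · intro h
    rw [h] at hμmem
    rw [co_eq_zero_iff.mpr rfl] at hμmem
    simp at hμmem
  · apply le_antisymm
    · rw [v_le_iff]
      exact (Ale (F := F) (v s)).add_mem (mem_Ale_v s) (Ale_mono (by omega) ht)
    · calc v s = wdeg μ := hdeg.symm
        _ ≤ v (s + t) := Finset.le_sup hμmem

section AdIdentities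

/-- `ad x` as a linear endomorphism -/
noncomputable def adE (x : WeylAlgebra F) : Module.End F (WeylAlgebra F) :=
  LinearMap.mulLeft F x - LinearMap.mulRight F x

lemma adE_apply (x w : WeylAlgebra F) : adE x w = x * w - w * x := rfl

lemma adE_iterate (x : WeylAlgebra F) (k : ℕ) (w : WeylAlgebra F) :
    (fun z : WeylAlgebra F => x * z - z * x)^[k] w = (adE x ^ k) w := by
  rw [Module.End.pow_apply]
  congr 1

lemma commute_adE_mulRight (x : WeylAlgebra F) :
    Commute (adE x) (LinearMap.mulRight F x) := by
  apply LinearMap.ext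
  intro w
  simp only [Module.End.mul_apply, adE_apply, LinearMap.mulRight_apply]
  rw [sub_mul, ← mul_assoc]

/-- right multiplication by a centralizing element passes through `ad x`. -/
lemma adE_mul_right_comm {x g : WeylAlgebra F} (hg : x * g = g * x) (z : WeylAlgebra F) :
    adE x (z * g) = adE x z * g := by
  simp only [adE_apply]
  rw [sub_mul, mul_assoc z g x, ← hg, ← mul_assoc, ← mul_assoc]

lemma adE_pow_mul_right_comm {x g : WeylAlgebra F} (hg : x * g = g * x) (k : ℕ)
    (z : WeylAlgebra F) : (adE x ^ k) (z * g) = (adE x ^ k) z * g := by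
  induction k with
  | zero => simp
  | succ m ih =>
      rw [pow_succ', Module.End.mul_apply, Module.End.mul_apply, ih,
        adE_mul_right_comm hg]

/-- The binomial expansion `x^m w = ∑ choose m k • (ad x)^k w * x^(m-k)`. -/
lemma pow_mul_expand (x w : WeylAlgebra F) (m : ℕ) :
    x ^ m * w = ∑ k ∈ Finset.range (m + 1),
      m.choose k • ((adE x ^ k) w * x ^ (m - k)) := by
  have hsplit : LinearMap.mulLeft F x = adE x + LinearMap.mulRight F x := by
    rw [adE]; abel
  have hpow : (LinearMap.mulLeft F x) ^ m
      = ∑ k ∈ Finset.range (m + 1),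
        adE x ^ k * (LinearMap.mulRight F x) ^ (m - k) * (m.choose k : Module.End F (WeylAlgebra F)) := by
    rw [hsplit]
    exact (commute_adE_mulRight x).add_pow m
  have happ := congrFun (congrArg (fun f : Module.End F (WeylAlgebra F) => (f : WeylAlgebra F → WeylAlgebra F)) hpow) w
  simp only [LinearMap.pow_mulLeft, LinearMap.mulLeft_apply] at happ
  rw [happ]
  rw [LinearMap.coe_sum, Finset.sum_apply]
  apply Finset.sum_congr rfl
  intro k _
  simp only [Module.End.mul_apply, Module.End.natCast_apply, map_nsmul,
    LinearMap.pow_mulRight, LinearMap.mulRight_apply]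
  rw [adE_pow_mul_right_comm (by rw [← pow_succ', ← pow_succ]) k w]

end AdIdentities

end WeylAux3

namespace WeylAux4
open WeylAux WeylAux2 WeylAux3

variable {F}

lemma adE_one (x : WeylAlgebra F) : adE x 1 = 0 := by
  simp [adE_apply]

lemma adE_mul (x a b : WeylAlgebra F) :
    adE x (a * b) = adE x a * b + a * adE x b := by
  simp only [adE_apply, sub_mul, mul_sub, ← mul_assoc]
  abel

lemma adE_p_q : adE (Wp F) (Wq F) = 1 := by
  rw [adE_apply, pq_rel]
  abel

lemma adE_p_q_pow (m : ℕ) : adE (Wp F) (Wq F ^ (m + 1)) = (m + 1) • Wq F ^ m := by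
  induction m with
  | zero => simpa using adE_p_q (F := F)
  | succ k ih =>
      have : Wq F ^ (k + 2) = Wq F ^ (k + 1) * Wq F := by rw [pow_succ]
      rw [this, adE_mul, ih, adE_p_q, mul_one, smul_mul_assoc, ← pow_succ]
      rw [succ_nsmul (Wq F ^ (k + 1)) (k + 1)]

lemma adE_pow_p_q_pow (t l : ℕ) :
    (adE (Wp F) ^ t) (Wq F ^ l) = l.descFactorial t • Wq F ^ (l - t) := by
  induction t with
  | zero => simp
  | succ s ih =>
      rw [pow_succ', Module.End.mul_apply, ih, map_nsmul]
      match hls : l - s with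
      | 0 =>
          have hl : l < s + 1 := by omega
          rw [pow_zero, adE_one, Nat.descFactorial_eq_zero_iff_lt.mpr hl]
          simp
      | Nat.succ u =>
          rw [adE_p_q_pow, smul_smul, Nat.descFactorial_succ, hls]
          have h1 : l - (s + 1) = u := by omega
          rw [h1]
          have : u.succ * l.descFactorial s = l.descFactorial s * (u + 1) := by
            rw [Nat.succ_eq_add_one]; ring
          rw [this]

/-- The full product expansion for basis monomials. -/
lemma bw_mul_expand (μ ν : ℕ × ℕ) :
    bw F μ * bw F ν = ∑ t ∈ Finset.range (μ.2 + 1),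
      (μ.2.choose t * ν.1.descFactorial t) • bw F (μ.1 + (ν.1 - t), (μ.2 - t) + ν.2) := by
  obtain ⟨j, i⟩ := μ
  obtain ⟨l, k⟩ := ν
  show Wq F ^ j * Wp F ^ i * (Wq F ^ l * Wp F ^ k) = _
  have h1 : Wq F ^ j * Wp F ^ i * (Wq F ^ l * Wp F ^ k)
      = Wq F ^ j * (Wp F ^ i * Wq F ^ l) * Wp F ^ k := by
    simp only [mul_assoc]
  rw [h1, pow_mul_expand (Wp F) (Wq F ^ l) i]
  rw [Finset.mul_sum, Finset.sum_mul]
  apply Finset.sum_congr rfl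
  intro t _
  rw [adE_pow_p_q_pow]
  simp only [smul_mul_assoc, mul_smul_comm, smul_smul, bw]
  rw [← mul_assoc, ← pow_add, mul_assoc, ← pow_add]

lemma bw_mul_mem_Ale (μ ν : ℕ × ℕ) :
    bw F μ * bw F ν ∈ Ale (F := F) (wdeg μ + wdeg ν) := by
  rw [bw_mul_expand]
  apply Submodule.sum_mem
  intro t _
  apply nsmul_mem
  rw [bw_mem_Ale]
  simp only [wdeg]
  omega

lemma co_bw_mul (μ ν L : ℕ × ℕ) (hL : wdeg μ + wdeg ν ≤ wdeg L) :
    co (bw F μ * bw F ν) L = if μ + ν = L then 1 else 0 := by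
  rw [bw_mul_expand]
  have hco : co (∑ t ∈ Finset.range (μ.2 + 1),
      (μ.2.choose t * ν.1.descFactorial t) • bw F (μ.1 + (ν.1 - t), (μ.2 - t) + ν.2))
      = ∑ t ∈ Finset.range (μ.2 + 1),
      (μ.2.choose t * ν.1.descFactorial t) • co (bw F (μ.1 + (ν.1 - t), (μ.2 - t) + ν.2)) := by
    rw [co]
    rw [map_sum]
    apply Finset.sum_congr rfl
    intro t _
    rw [map_nsmul]
    rfl
  rw [hco, Finsupp.finset_sum_apply]
  rw [Finset.sum_eq_single_of_mem 0 (Finset.mem_range.mpr (by omega))]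
  · rw [co_bw]
    simp only [Nat.choose_zero_right, Nat.descFactorial_zero, mul_one, one_smul,
      Nat.sub_zero]
    rw [Finsupp.single_apply]
    have : (μ.1 + ν.1, μ.2 + ν.2) = μ + ν := rfl
    rw [this]
  · intro t _ ht
    rcases Nat.lt_or_ge ν.1 t with hlt | hge
    · rw [Nat.descFactorial_eq_zero_iff_lt.mpr hlt]
      simp
    · rw [co_bw, Finsupp.smul_apply, Finsupp.single_apply]
      have hne : (μ.1 + (ν.1 - t), (μ.2 - t) + ν.2) ≠ L := by
        intro h
        have : wdeg (μ.1 + (ν.1 - t), (μ.2 - t) + ν.2) = wdeg L := by rw [h]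
        simp only [wdeg] at this hL
        omega
      rw [if_neg hne]
      simp

lemma co_expand (a : WeylAlgebra F) :
    a = ∑ μ ∈ (co a).support, co a μ • bw F μ := by
  conv_lhs => rw [← (bB (F := F)).linearCombination_repr a]
  rw [Finsupp.linearCombination_apply, Finsupp.sum]
  apply Finset.sum_congr rfl
  intro μ _
  rw [bB_apply]
  rfl

lemma mul_expand (a b : WeylAlgebra F) :
    a * b = ∑ μ ∈ (co a).support, ∑ ν ∈ (co b).support,
      (co a μ * co b ν) • (bw F μ * bw F ν) := by
  conv_lhs => rw [co_expand a, co_expand b]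
  rw [Finset.sum_mul]
  apply Finset.sum_congr rfl
  intro μ _
  rw [Finset.mul_sum]
  apply Finset.sum_congr rfl
  intro ν _
  rw [smul_mul_assoc, mul_smul_comm, smul_smul]

lemma Ale_mul {a b : WeylAlgebra F} {c d : ℕ} (ha : a ∈ Ale (F := F) c)
    (hb : b ∈ Ale (F := F) d) : a * b ∈ Ale (F := F) (c + d) := by
  rw [mul_expand]
  apply Submodule.sum_mem
  intro μ hμ
  apply Submodule.sum_mem
  intro ν hν
  apply Submodule.smul_mem
  exact Ale_mono (by have := ha μ hμ; have := hb ν hν; omega) (bw_mul_mem_Ale μ ν)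

lemma co_mul_top {a b : WeylAlgebra F} {L : ℕ × ℕ} (hL : v a + v b ≤ wdeg L) :
    co (a * b) L = ∑ μ ∈ (co a).support, ∑ ν ∈ (co b).support,
      (if μ + ν = L then co a μ * co b ν else 0) := by
  conv_lhs => rw [mul_expand a b]
  rw [show co (∑ μ ∈ (co a).support, ∑ ν ∈ (co b).support,
      (co a μ * co b ν) • (bw F μ * bw F ν))
      = ∑ μ ∈ (co a).support, ∑ ν ∈ (co b).support,
      (co a μ * co b ν) • co (bw F μ * bw F ν) by
    rw [co, map_sum]
    apply Finset.sum_congr rfl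
    intro μ _
    rw [map_sum]
    apply Finset.sum_congr rfl
    intro ν _
    rw [map_smul]
    rfl]
  rw [Finsupp.finset_sum_apply]
  apply Finset.sum_congr rfl
  intro μ hμ
  rw [Finsupp.finset_sum_apply]
  apply Finset.sum_congr rfl
  intro ν hν
  rw [Finsupp.smul_apply]
  have h1 : wdeg μ + wdeg ν ≤ wdeg L := by
    have := (mem_Ale_v a) μ hμ
    have := (mem_Ale_v b) ν hν
    omega
  rw [co_bw_mul μ ν L h1]
  by_cases h : μ + ν = L
  · rw [if_pos h, if_pos h, smul_eq_mul, mul_one]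
  · rw [if_neg h, if_neg h, smul_eq_mul, mul_zero]

end WeylAux4

namespace WeylAux5
open WeylAux WeylAux2 WeylAux3 WeylAux4

variable {F}

noncomputable def topSup (a : WeylAlgebra F) : ℕ :=
  ((co a).support.filter (fun μ => wdeg μ = v a)).sup (fun μ => μ.1)

/-- the leading pair of a nonzero element -/
noncomputable def leadPair (a : WeylAlgebra F) : ℕ × ℕ :=
  (topSup a, v a - topSup a)

lemma leadPair_spec {a : WeylAlgebra F} (ha : a ≠ 0) :
    leadPair a ∈ (co a).support ∧ wdeg (leadPair a) = v a := by
  obtain ⟨μ₀, hμ₀, hd₀⟩ := exists_wdeg_eq_v ha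
  have hne : ((co a).support.filter (fun μ => wdeg μ = v a)).Nonempty :=
    ⟨μ₀, Finset.mem_filter.mpr ⟨hμ₀, hd₀⟩⟩
  obtain ⟨ν, hν, hsup⟩ := Finset.exists_mem_eq_sup _ hne (fun μ : ℕ × ℕ => μ.1)
  rcases Finset.mem_filter.mp hν with ⟨hνs, hνd⟩
  have hl : leadPair a = ν := by
    have h1 : topSup a = ν.1 := hsup
    have h2 : wdeg ν = v a := hνd
    simp only [wdeg] at h2
    apply Prod.ext
    · exact h1
    · show v a - topSup a = ν.2
      omega
  rw [hl]
  exact ⟨hνs, hνd⟩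

lemma leadPair_max {a : WeylAlgebra F} {μ : ℕ × ℕ} (hμ : μ ∈ (co a).support)
    (hd : wdeg μ = v a) : μ.1 ≤ (leadPair a).1 :=
  Finset.le_sup (Finset.mem_filter.mpr ⟨hμ, hd⟩)

lemma lead_unique {a b : WeylAlgebra F} {μ ν : ℕ × ℕ}
    (hμ : μ ∈ (co a).support) (hν : ν ∈ (co b).support)
    (hsum : μ + ν = leadPair a + leadPair b) :
    μ = leadPair a ∧ ν = leadPair b := by
  have ha : a ≠ 0 := fun h => by
    rw [h, co_eq_zero_iff.mpr rfl] at hμ; simp at hμ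
  have hb : b ≠ 0 := fun h => by
    rw [h, co_eq_zero_iff.mpr rfl] at hν; simp at hν
  obtain ⟨hma, hda⟩ := leadPair_spec ha
  obtain ⟨hmb, hdb⟩ := leadPair_spec hb
  have h1 : wdeg μ ≤ v a := (mem_Ale_v a) μ hμ
  have h2 : wdeg ν ≤ v b := (mem_Ale_v b) ν hν
  have hs1 : μ.1 + ν.1 = (leadPair a).1 + (leadPair b).1 := congrArg Prod.fst hsum
  have hs2 : μ.2 + ν.2 = (leadPair a).2 + (leadPair b).2 := congrArg Prod.snd hsum
  simp only [wdeg] at h1 h2 hda hdb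
  have hdμ : wdeg μ = v a := by simp only [wdeg]; omega
  have hdν : wdeg ν = v b := by simp only [wdeg]; omega
  have hm1 : μ.1 ≤ (leadPair a).1 := leadPair_max hμ hdμ
  have hm2 : ν.1 ≤ (leadPair b).1 := leadPair_max hν hdν
  simp only [wdeg] at hdμ hdν
  constructor
  · apply Prod.ext <;> omega
  · apply Prod.ext <;> omega

/-- top-degree multiplicativity: the Weyl algebra is a "graded domain". -/
lemma v_mul {a b : WeylAlgebra F} (ha : a ≠ 0) (hb : b ≠ 0) :
    a * b ≠ 0 ∧ v (a * b) = v a + v b := by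
  set L := leadPair a + leadPair b with hL
  obtain ⟨hma, hda⟩ := leadPair_spec ha
  obtain ⟨hmb, hdb⟩ := leadPair_spec hb
  have hwL : wdeg L = v a + v b := by
    have h1 : L.1 = (leadPair a).1 + (leadPair b).1 := rfl
    have h2 : L.2 = (leadPair a).2 + (leadPair b).2 := rfl
    simp only [wdeg] at hda hdb ⊢
    omega
  have hco : co (a * b) L = co a (leadPair a) * co b (leadPair b) := by
    rw [co_mul_top (le_of_eq hwL.symm)]
    rw [Finset.sum_eq_single_of_mem (leadPair a) hma]
    · rw [Finset.sum_eq_single_of_mem (leadPair b) hmb]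
      · rw [if_pos rfl]
      · intro ν hν hne
        rw [if_neg (fun h => hne (lead_unique hma hν h).2)]
    · intro μ hμ hne
      apply Finset.sum_eq_zero
      intro ν hν
      rw [if_neg (fun h => hne (lead_unique hμ hν h).1)]
  have hne : co (a * b) L ≠ 0 := by
    rw [hco]
    exact mul_ne_zero (Finsupp.mem_support_iff.mp hma) (Finsupp.mem_support_iff.mp hmb)
  have hmem : L ∈ (co (a * b)).support := Finsupp.mem_support_iff.mpr hne
  constructor
  · intro h
    rw [h, co_eq_zero_iff.mpr rfl] at hmem
    simp at hmem
  · apply le_antisymm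
    · rw [v_le_iff]
      exact Ale_mul (mem_Ale_v a) (mem_Ale_v b)
    · calc v a + v b = wdeg L := hwL.symm
        _ ≤ v (a * b) := Finset.le_sup hmem

lemma co_sub (a b : WeylAlgebra F) : co (a - b) = co a - co b := by simp [co]

/-- commutators drop degree. -/
lemma comm_mem_Ale (a b : WeylAlgebra F) :
    a * b - b * a ∈ Ale (F := F) (v a + v b - 1) := by
  by_cases ha : a = 0
  · simp [ha, (Ale (F := F) _).zero_mem]
  by_cases hb : b = 0
  · simp [hb, (Ale (F := F) _).zero_mem]
  intro μ hμ
  have hmem : a * b - b * a ∈ Ale (F := F) (v a + v b) := by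
    apply Submodule.sub_mem
    · exact Ale_mul (mem_Ale_v a) (mem_Ale_v b)
    · exact Ale_mono (by omega) (Ale_mul (mem_Ale_v b) (mem_Ale_v a))
  have hle : wdeg μ ≤ v a + v b := hmem μ hμ
  rcases Nat.lt_or_ge (wdeg μ) (v a + v b) with h | h
  · omega
  · -- wdeg μ = v a + v b : show the coefficient vanishes, contradiction
    exfalso
    have heq : wdeg μ = v a + v b := le_antisymm hle h
    have hz : co (a * b - b * a) μ = 0 := by
      rw [co_sub, Finsupp.sub_apply]
      rw [co_mul_top (by omega), co_mul_top (by omega)]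
      rw [Finset.sum_comm]
      rw [sub_eq_zero]
      apply Finset.sum_congr rfl
      intro ν _
      apply Finset.sum_congr rfl
      intro ρ _
      rw [mul_comm ((co a) ρ) ((co b) ν), add_comm ρ ν]
    exact Finsupp.mem_support_iff.mp hμ hz

lemma adE_mem_Ale {x z : WeylAlgebra F} {e : ℕ} (hz : z ∈ Ale (F := F) e) :
    adE x z ∈ Ale (F := F) (v x + e - 1) := by
  have h := comm_mem_Ale x z
  have hvz : v z ≤ e := v_le_iff.mpr hz
  exact Ale_mono (by omega) h

lemma adE_pow_mem_Ale {x z : WeylAlgebra F} {e : ℕ} (hz : z ∈ Ale (F := F) e)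
    (hr : 1 ≤ v x) (k : ℕ) :
    (adE x ^ k) z ∈ Ale (F := F) (e + k * (v x - 1)) := by
  induction k with
  | zero => simpa using hz
  | succ m ih =>
      rw [pow_succ', Module.End.mul_apply]
      have h := adE_mem_Ale (x := x) ih
      apply Ale_mono _ h
      have h1 : v x + (e + m * (v x - 1)) - 1 = e + m * (v x - 1) + (v x - 1) := by omega
      rw [h1]
      have : e + (m + 1) * (v x - 1) = e + m * (v x - 1) + (v x - 1) := by ring
      omega

lemma pow_mem_Ale (x : WeylAlgebra F) (i : ℕ) : x ^ i ∈ Ale (F := F) (i * v x) := by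
  induction i with
  | zero =>
      rw [pow_zero]
      have : bw F (0, 0) = 1 := by simp [bw]
      rw [← this]
      rw [bw_mem_Ale]
      simp [wdeg]
  | succ m ih =>
      rw [pow_succ]
      exact Ale_mono (by ring_nf; omega) (Ale_mul ih (mem_Ale_v x))

lemma v_one : v (1 : WeylAlgebra F) = 0 := by
  have : bw F (0, 0) = 1 := by simp [bw]
  rw [← this, v_bw]
  simp [wdeg]

lemma one_ne_zero' : (1 : WeylAlgebra F) ≠ 0 := by
  intro h
  have hb1 : bw F (0, 0) = 1 := by simp [bw]
  have h1 : co (bw F (0, 0)) = 0 := by rw [hb1, h, co_eq_zero_iff.mpr rfl]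
  rw [co_bw] at h1
  have := congrFun (congrArg (fun g : (ℕ × ℕ) →₀ F => (g : (ℕ × ℕ) → F)) h1) (0, 0)
  simp at this

lemma v_pow {x : WeylAlgebra F} (hx : x ≠ 0) (m : ℕ) :
    x ^ m ≠ 0 ∧ v (x ^ m) = m * v x := by
  induction m with
  | zero => simpa using ⟨one_ne_zero', v_one⟩
  | succ k ih =>
      obtain ⟨h1, h2⟩ := ih
      obtain ⟨h3, h4⟩ := v_mul h1 hx
      rw [← pow_succ] at h3 h4
      exact ⟨h3, by rw [h4, h2]; ring⟩

lemma v_smul {c : F} (hc : c ≠ 0) (a : WeylAlgebra F) : v (c • a) = v a := by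
  rw [v, v, co_smul, Finsupp.support_smul_eq hc]

lemma smul_ne_zero' {c : F} (hc : c ≠ 0) {a : WeylAlgebra F} (ha : a ≠ 0) : c • a ≠ 0 :=
  smul_ne_zero hc ha

lemma scalar_of_mem_Ale_zero {a : WeylAlgebra F} (ha : a ∈ Ale (F := F) 0) :
    ∃ c : F, a = algebraMap F (WeylAlgebra F) c := by
  refine ⟨co a (0, 0), ?_⟩
  have hsub : (co a).support ⊆ {((0 : ℕ), (0 : ℕ))} := by
    intro μ hμ
    have := ha μ hμ
    simp only [wdeg] at this
    simp only [Finset.mem_singleton]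
    have h1 : μ.1 = 0 ∧ μ.2 = 0 := by omega
    exact Prod.ext h1.1 h1.2
  conv_lhs => rw [co_expand a, Finset.sum_subset hsub (fun μ _ hne => by
    rw [Finsupp.notMem_support_iff.mp hne, zero_smul])]
  simp only [Finset.sum_singleton]
  have hb1 : bw F (0, 0) = 1 := by simp [bw]
  rw [hb1, Algebra.algebraMap_eq_smul_one]

lemma v_algebraMap (c : F) : v (algebraMap F (WeylAlgebra F) c) = 0 := by
  rw [Algebra.algebraMap_eq_smul_one]
  by_cases hc : c = 0
  · rw [hc, zero_smul]
    rw [v, co_eq_zero_iff.mpr rfl]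
    simp
  · rw [v_smul hc, v_one]

end WeylAux5

namespace WeylAux6
open WeylAux WeylAux2 WeylAux3 WeylAux4 WeylAux5 Polynomial

variable {F}

lemma commute_aeval (x : WeylAlgebra F) (g : Polynomial F) :
    x * Polynomial.aeval x g = Polynomial.aeval x g * x := by
  calc x * Polynomial.aeval x g = Polynomial.aeval x (X * g) := by rw [map_mul, aeval_X]
    _ = Polynomial.aeval x (g * X) := by rw [mul_comm]
    _ = Polynomial.aeval x g * x := by rw [map_mul, aeval_X]

lemma aeval_eq_support_sum (x : WeylAlgebra F) (g : Polynomial F) :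
    Polynomial.aeval x g = ∑ m ∈ g.support, g.coeff m • x ^ m := by
  rw [aeval_def, eval₂_eq_sum, Polynomial.sum_def]
  apply Finset.sum_congr rfl
  intro m _
  rw [← Algebra.smul_def]

lemma aeval_hasseDeriv_expand (x : WeylAlgebra F) (g : Polynomial F) (k : ℕ) :
    Polynomial.aeval x (g.hasseDeriv k)
      = ∑ m ∈ g.support, (↑(m.choose k) * g.coeff m) • x ^ (m - k) := by
  rw [Polynomial.hasseDeriv_apply, Polynomial.sum_def, map_sum]
  apply Finset.sum_congr rfl
  intro m _
  rw [Polynomial.aeval_monomial, ← Algebra.smul_def]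

/-- The key expansion `g(x) w = ∑_k (ad x)^k(w) · g_k(x)`. -/
lemma aeval_mul_expand (x w : WeylAlgebra F) (g : Polynomial F) {M : ℕ}
    (hM : g.natDegree ≤ M) :
    Polynomial.aeval x g * w = ∑ k ∈ Finset.range (M + 1),
      (adE x ^ k) w * Polynomial.aeval x (g.hasseDeriv k) := by
  rw [aeval_eq_support_sum, Finset.sum_mul]
  have step1 : ∀ m ∈ g.support, g.coeff m • x ^ m * w
      = ∑ k ∈ Finset.range (M + 1),
        (↑(m.choose k) * g.coeff m) • ((adE x ^ k) w * x ^ (m - k)) := by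
    intro m hm
    have hmM : m + 1 ≤ M + 1 := by
      have := Polynomial.le_natDegree_of_mem_supp m hm
      omega
    rw [smul_mul_assoc, pow_mul_expand, Finset.smul_sum]
    rw [Finset.sum_subset (Finset.range_subset_range.mpr hmM)]
    · apply Finset.sum_congr rfl
      intro k _
      rw [← Nat.cast_smul_eq_nsmul F (m.choose k) ((adE x ^ k) w * x ^ (m - k))]
      rw [smul_smul, mul_comm (g.coeff m)]
    · intro k hk1 hk2
      have hmk : m < k := by
        simp only [Finset.mem_range] at hk1 hk2
        omega
      rw [Nat.choose_eq_zero_of_lt hmk]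
      simp
  rw [Finset.sum_congr rfl step1, Finset.sum_comm]
  apply Finset.sum_congr rfl
  intro k _
  rw [aeval_hasseDeriv_expand, Finset.mul_sum]
  apply Finset.sum_congr rfl
  intro m _
  rw [mul_smul_comm]

/-- The commutator expansion `[g(x), w] = ∑_{j} (ad x)^j(ad x w) · g_{j+1}(x)`. -/
lemma aeval_comm_expand (x w : WeylAlgebra F) (g : Polynomial F) {M : ℕ}
    (hM : g.natDegree ≤ M) :
    Polynomial.aeval x g * w - w * Polynomial.aeval x g
      = ∑ j ∈ Finset.range M,
        (adE x ^ j) (adE x w) * Polynomial.aeval x (g.hasseDeriv (j + 1)) := by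
  rw [aeval_mul_expand x w g hM, Finset.sum_range_succ']
  have h0 : (adE x ^ 0) w * Polynomial.aeval x (g.hasseDeriv 0) =
      w * Polynomial.aeval x g := by
    rw [pow_zero, Polynomial.hasseDeriv_zero']
    simp
  rw [h0, add_sub_cancel_right]
  apply Finset.sum_congr rfl
  intro j _
  rw [pow_succ, Module.End.mul_apply]

lemma aeval_mem_Ale {x : WeylAlgebra F} {g : Polynomial F} {m : ℕ} (hg : g.natDegree ≤ m) :
    Polynomial.aeval x g ∈ Ale (F := F) (m * v x) := by
  rw [aeval_eq_support_sum]
  apply Submodule.sum_mem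
  intro i hi
  apply Submodule.smul_mem
  have hi' : i ≤ m := (Polynomial.le_natDegree_of_mem_supp i hi).trans hg
  exact Ale_mono (Nat.mul_le_mul_right _ hi') (pow_mem_Ale x i)

lemma v_zero : v (0 : WeylAlgebra F) = 0 := by
  rw [v, co_eq_zero_iff.mpr rfl]
  simp

/-- exact degree of polynomial values. -/
lemma v_aeval {x : WeylAlgebra F} (hx : x ≠ 0) (hr : 1 ≤ v x) {g : Polynomial F}
    (hg : g ≠ 0) :
    Polynomial.aeval x g ≠ 0 ∧ v (Polynomial.aeval x g) = g.natDegree * v x := by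
  rcases Nat.eq_zero_or_pos g.natDegree with hd | hd
  · have hc : g.coeff 0 ≠ 0 := by
      intro h
      apply hg
      have := Polynomial.eq_C_of_natDegree_eq_zero hd
      rw [this, h, map_zero]
    have hgC := Polynomial.eq_C_of_natDegree_eq_zero hd
    constructor
    · rw [hgC, aeval_C]
      intro h
      have : g.coeff 0 • (1 : WeylAlgebra F) = 0 := by
        rw [← Algebra.algebraMap_eq_smul_one, h]
      rcases smul_eq_zero.mp this with h1 | h1
      · exact hc h1
      · exact one_ne_zero' h1
    · rw [hgC, aeval_C, Polynomial.natDegree_C, zero_mul, v_algebraMap]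
  · set d := g.natDegree with hdd
    have hlc : g.leadingCoeff ≠ 0 := Polynomial.leadingCoeff_ne_zero.mpr hg
    have hxd := v_pow hx d
    have hs0 : g.leadingCoeff • x ^ d ≠ 0 := smul_ne_zero hlc hxd.1
    have hvs : v (g.leadingCoeff • x ^ d) = d * v x := by
      rw [v_smul hlc, hxd.2]
    have hsplit : Polynomial.aeval x g
        = g.leadingCoeff • x ^ d + Polynomial.aeval x g.eraseLead := by
      conv_lhs => rw [← Polynomial.eraseLead_add_C_mul_X_pow g]
      rw [map_add, map_mul, aeval_C, map_pow, aeval_X, ← Algebra.smul_def]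
      rw [add_comm]
    have ht : Polynomial.aeval x g.eraseLead ∈ Ale (F := F) (v (g.leadingCoeff • x ^ d) - 1) := by
      have h1 : g.eraseLead.natDegree ≤ d - 1 := Polynomial.eraseLead_natDegree_le g
      have h2 := aeval_mem_Ale (x := x) h1
      apply Ale_mono _ h2
      rw [hvs]
      have e1 : (d - 1) * v x = d * v x - v x := by rw [Nat.sub_mul, one_mul]
      have e2 : v x ≤ d * v x := by
        calc v x = 1 * v x := (one_mul _).symm
          _ ≤ d * v x := Nat.mul_le_mul_right _ hd
      omega
    have h1vs : 1 ≤ v (g.leadingCoeff • x ^ d) := by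
      rw [hvs]
      calc 1 = 1 * 1 := (one_mul 1).symm
        _ ≤ d * v x := Nat.mul_le_mul hd hr
    obtain ⟨hne, hveq⟩ := dom_add hs0 h1vs ht
    rw [hsplit]
    exact ⟨hne, by rw [hveq, hvs]⟩

/-- The dominant-term lemma: the "h(T)u" sum is nonzero of exact degree. -/
lemma LD {x : WeylAlgebra F} (hx0 : x ≠ 0) (hr : 1 ≤ v x) {g : Polynomial F}
    (hg : 2 ≤ g.natDegree) {u : WeylAlgebra F} (hu : u ≠ 0) :
    (∑ j ∈ Finset.range g.natDegree,
        (adE x ^ j) u * Polynomial.aeval x (g.hasseDeriv (j + 1))) ≠ 0 ∧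
    v (∑ j ∈ Finset.range g.natDegree,
        (adE x ^ j) u * Polynomial.aeval x (g.hasseDeriv (j + 1)))
      = v u + (g.natDegree - 1) * v x := by
  have hg0 : g ≠ 0 := fun h => by rw [h] at hg; simp at hg
  set N := g.natDegree with hN
  -- the derivative of g is nonzero of degree N - 1
  have hder : Polynomial.derivative g ≠ 0 ∧ (Polynomial.derivative g).natDegree = N - 1 := by
    have hco : (Polynomial.derivative g).coeff (N - 1) ≠ 0 := by
      rw [Polynomial.coeff_derivative]
      have hNN : N - 1 + 1 = N := by omega
      rw [hNN]
      apply mul_ne_zero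
      · show g.coeff g.natDegree ≠ 0
        exact Polynomial.leadingCoeff_ne_zero.mpr hg0
      · have h2 : ((N - 1 : ℕ) : F) + 1 = ((N - 1 + 1 : ℕ) : F) := by push_cast; ring
        rw [h2, hNN]
        exact Nat.cast_ne_zero.mpr (by omega)
    constructor
    · intro h; rw [h] at hco; simp at hco
    · apply le_antisymm
      · have := Polynomial.natDegree_derivative_le g
        omega
      · exact Polynomial.le_natDegree_of_ne_zero hco
  have haev := v_aeval hx0 hr hder.1
  -- the dominant term
  set s := u * Polynomial.aeval x (Polynomial.derivative g) with hs
  obtain ⟨hs0, hvs⟩ := v_mul hu haev.1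
  have hvs' : v s = v u + (N - 1) * v x := by
    rw [hs, hvs, haev.2, hder.2]
  -- split the sum
  have hsum : ∑ j ∈ Finset.range N,
      (adE x ^ j) u * Polynomial.aeval x (g.hasseDeriv (j + 1))
      = s + ∑ j ∈ Finset.Ico 1 N,
      (adE x ^ j) u * Polynomial.aeval x (g.hasseDeriv (j + 1)) := by
    rw [Finset.range_eq_Ico, Finset.sum_eq_sum_Ico_succ_bot (by omega : 0 < N)]
    congr 1
    rw [pow_zero]
    have h01 : (0 : ℕ) + 1 = 1 := rfl
    rw [h01, Polynomial.hasseDeriv_one']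
    simp [hs]
  have ht : (∑ j ∈ Finset.Ico 1 N,
      (adE x ^ j) u * Polynomial.aeval x (g.hasseDeriv (j + 1)))
      ∈ Ale (F := F) (v s - 1) := by
    apply Submodule.sum_mem
    intro j hj
    rcases Finset.mem_Ico.mp hj with ⟨hj1, hj2⟩
    have hterm := Ale_mul (adE_pow_mem_Ale (mem_Ale_v u) hr j)
      (aeval_mem_Ale (x := x) (Polynomial.natDegree_hasseDeriv_le g (j + 1)))
    apply Ale_mono _ hterm
    rw [hvs']
    have e1 : j * (v x - 1) = j * v x - j := by rw [Nat.mul_sub, mul_one]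
    have e2 : (N - (j + 1)) * v x = (N - 1) * v x - j * v x := by
      have h3 : N - (j + 1) = N - 1 - j := by omega
      rw [h3, Nat.sub_mul]
    have e3 : j ≤ j * v x := by
      calc j = j * 1 := (mul_one j).symm
        _ ≤ j * v x := Nat.mul_le_mul_left _ hr
    have e4 : j * v x ≤ (N - 1) * v x := Nat.mul_le_mul_right _ (by omega)
    have e5 : 1 ≤ (N - 1) * v x := by
      calc 1 = 1 * 1 := (one_mul 1).symm
        _ ≤ (N - 1) * v x := Nat.mul_le_mul (by omega) hr
    rw [← hN, e1, e2]
    omega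
  have h1vs : 1 ≤ v s := by
    rw [hvs']
    have e5 : 1 ≤ (N - 1) * v x := by
      calc 1 = 1 * 1 := (one_mul 1).symm
        _ ≤ (N - 1) * v x := Nat.mul_le_mul (by omega) hr
    omega
  obtain ⟨hne, hveq⟩ := dom_add hs0 h1vs ht
  rw [hsum]
  exact ⟨hne, by rw [hveq, hvs']⟩

end WeylAux6

namespace WeylMain
open WeylAux WeylAux2 WeylAux3 WeylAux4 WeylAux5 WeylAux6 Polynomial

variable {F}

lemma adE_adE_comm {x X : WeylAlgebra F} (hcomm : x * X = X * x) (w : WeylAlgebra F) :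
    adE x (adE X w) = adE X (adE x w) := by
  have h : adE x (adE X w) - adE X (adE x w)
      = (x * X - X * x) * w - w * (x * X - X * x) := by
    simp only [adE_apply, mul_sub, sub_mul, mul_assoc]
    abel
  have h2 : adE x (adE X w) - adE X (adE x w) = 0 := by
    rw [h, hcomm]
    simp
  exact sub_eq_zero.mp h2

variable {x : WeylAlgebra F} {g : Polynomial F}

lemma NV_pos (hr : 1 ≤ v x) (hg : 2 ≤ g.natDegree) : 1 ≤ (g.natDegree - 1) * v x := by
  calc 1 = 1 * 1 := (one_mul 1).symm
    _ ≤ (g.natDegree - 1) * v x := Nat.mul_le_mul (by omega) hr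

/-- centralizer of `g(x)` is contained in that of `x`. -/
lemma cent_sub (hx0 : x ≠ 0) (hr : 1 ≤ v x) (hg : 2 ≤ g.natDegree) {w : WeylAlgebra F}
    (hw : Polynomial.aeval x g * w - w * Polynomial.aeval x g = 0) :
    x * w - w * x = 0 := by
  by_contra hu
  have hu' : adE x w ≠ 0 := hu
  have hexp := aeval_comm_expand x w g (le_refl g.natDegree)
  rw [hw] at hexp
  exact (LD hx0 hr hg hu').1 hexp.symm

lemma cent_sup {w : WeylAlgebra F} (hw : x * w - w * x = 0) :
    Polynomial.aeval x g * w - w * Polynomial.aeval x g = 0 := by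
  have hexp := aeval_comm_expand x w g (le_refl g.natDegree)
  rw [hexp]
  apply Finset.sum_eq_zero
  intro j _
  rw [show adE x w = 0 from hw, map_zero, zero_mul]

/-- no nonzero eigenvectors for `ad g(x)`. -/
lemma eigen_zero (hx0 : x ≠ 0) (hr : 1 ≤ v x) (hg : 2 ≤ g.natDegree) {w : WeylAlgebra F}
    {c : F} (hc : c ≠ 0)
    (hw : Polynomial.aeval x g * w - w * Polynomial.aeval x g = c • w) : w = 0 := by
  by_contra hw0
  have hcomm : x * Polynomial.aeval x g = Polynomial.aeval x g * x := commute_aeval x g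
  have step : ∀ z : WeylAlgebra F, z ≠ 0 →
      Polynomial.aeval x g * z - z * Polynomial.aeval x g = c • z →
      adE x z ≠ 0 ∧ v z = v (adE x z) + (g.natDegree - 1) * v x := by
    intro z hz0 hz
    have hexp := aeval_comm_expand x z g (le_refl g.natDegree)
    rw [hz] at hexp
    have hTz : adE x z ≠ 0 := by
      intro h0
      rw [Finset.sum_congr rfl (fun j _ => by
        rw [h0, map_zero, zero_mul] : ∀ j ∈ Finset.range g.natDegree, _ = (0 : WeylAlgebra F))] at hexp
      rw [Finset.sum_const_zero] at hexp
      exact hz0 ((smul_eq_zero.mp hexp).resolve_left hc)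
    obtain ⟨hne, hveq⟩ := LD hx0 hr hg hTz
    refine ⟨hTz, ?_⟩
    rw [← hexp, v_smul hc] at hveq
    exact hveq
  have iter : ∀ k : ℕ, (adE x ^ k) w ≠ 0 ∧
      (Polynomial.aeval x g * ((adE x ^ k) w) - ((adE x ^ k) w) * Polynomial.aeval x g
        = c • ((adE x ^ k) w)) ∧
      v w = v ((adE x ^ k) w) + k * ((g.natDegree - 1) * v x) := by
    intro k
    induction k with
    | zero =>
        refine ⟨by simpa using hw0, by simpa using hw, by simp⟩
    | succ m ih =>
        obtain ⟨ih0, ih1, ih2⟩ := ih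
        have e : (adE x ^ (m + 1)) w = adE x ((adE x ^ m) w) := by
          rw [pow_succ', Module.End.mul_apply]
        have hnext : Polynomial.aeval x g * ((adE x ^ (m + 1)) w)
            - ((adE x ^ (m + 1)) w) * Polynomial.aeval x g = c • ((adE x ^ (m + 1)) w) := by
          rw [e]
          show adE (Polynomial.aeval x g) (adE x ((adE x ^ m) w)) = _
          rw [← adE_adE_comm hcomm ((adE x ^ m) w)]
          have h1 : adE (Polynomial.aeval x g) ((adE x ^ m) w) = c • ((adE x ^ m) w) := ih1
          rw [h1, map_smul]
        have hstep := step _ ih0 ih1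
        refine ⟨by rw [e]; exact hstep.1, hnext, ?_⟩
        rw [e] at hnext ⊢
        rw [ih2, hstep.2]
        ring
  obtain ⟨h0, _, h2⟩ := iter (v w + 1)
  have hNx := NV_pos hr hg
  have : v w + 1 ≤ (v w + 1) * ((g.natDegree - 1) * v x) := Nat.le_mul_of_pos_right _ (by omega)
  omega

/-- `g(x)` is unsolvable. -/
lemma not_solvable_core (hx0 : x ≠ 0) (hr : 1 ≤ v x) (hg : 2 ≤ g.natDegree) :
    ¬ ∃ y : WeylAlgebra F, Polynomial.aeval x g * y - y * Polynomial.aeval x g = 1 := by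
  rintro ⟨y, hy⟩
  have hexp := aeval_comm_expand x y g (le_refl g.natDegree)
  rw [hy] at hexp
  by_cases hu : adE x y = 0
  · rw [Finset.sum_congr rfl (fun j _ => by
      rw [hu, map_zero, zero_mul] : ∀ j ∈ Finset.range g.natDegree, _ = (0 : WeylAlgebra F))] at hexp
    rw [Finset.sum_const_zero] at hexp
    exact one_ne_zero' hexp
  · obtain ⟨hne, hveq⟩ := LD hx0 hr hg hu
    rw [← hexp, v_one] at hveq
    have hNx := NV_pos hr hg
    omega

lemma AD_T_swap (hcomm : x * Polynomial.aeval x g = Polynomial.aeval x g * x) :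
    ∀ (k : ℕ) (z : WeylAlgebra F),
      (adE (Polynomial.aeval x g) ^ k) (adE x z) = adE x ((adE (Polynomial.aeval x g) ^ k) z) := by
  intro k
  induction k with
  | zero => intro z; simp
  | succ n ihn =>
      intro z
      rw [pow_succ, Module.End.mul_apply, Module.End.mul_apply]
      rw [← adE_adE_comm hcomm z]
      exact ihn _

/-- `N(g(x)) ⊆ N(x)`. -/
lemma N_sub (hx0 : x ≠ 0) (hr : 1 ≤ v x) (hg : 2 ≤ g.natDegree) :
    ∀ (m : ℕ) (w : WeylAlgebra F), (adE (Polynomial.aeval x g) ^ m) w = 0 →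
      ∃ k, (adE x ^ k) w = 0 := by
  intro m
  induction m with
  | zero => intro w hw; exact ⟨0, by simpa using hw⟩
  | succ m ih =>
      intro w hw
      have hcomm : x * Polynomial.aeval x g = Polynomial.aeval x g * x := commute_aeval x g
      have hy : adE (Polynomial.aeval x g) ((adE (Polynomial.aeval x g) ^ m) w) = 0 := by
        rw [← Module.End.mul_apply, ← pow_succ']
        exact hw
      have hty : adE x ((adE (Polynomial.aeval x g) ^ m) w) = 0 :=
        cent_sub hx0 hr hg hy
      have hTw : (adE (Polynomial.aeval x g) ^ m) (adE x w) = 0 := by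
        rw [AD_T_swap hcomm m w, hty]
      obtain ⟨k, hk⟩ := ih _ hTw
      refine ⟨k + 1, ?_⟩
      rw [pow_succ, Module.End.mul_apply]
      exact hk

/-- `N(x) ⊆ N(g(x))`. -/
lemma N_sup (hg : 2 ≤ g.natDegree) :
    ∀ (m : ℕ) (w : WeylAlgebra F), (adE x ^ m) w = 0 →
      (adE (Polynomial.aeval x g) ^ m) w = 0 := by
  intro m
  induction m with
  | zero => intro w hw; simpa using hw
  | succ m ih =>
      intro w hw
      have hTm : (adE x ^ m) (adE (Polynomial.aeval x g) w) = 0 := by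
        have hexp := aeval_comm_expand x w g (le_refl g.natDegree)
        have hADw : adE (Polynomial.aeval x g) w = ∑ j ∈ Finset.range g.natDegree,
            (adE x ^ j) (adE x w) * Polynomial.aeval x (g.hasseDeriv (j + 1)) := hexp
        rw [hADw, map_sum]
        apply Finset.sum_eq_zero
        intro j _
        rw [adE_pow_mul_right_comm (commute_aeval x (g.hasseDeriv (j + 1))) m]
        have hz : (adE x ^ m) ((adE x ^ j) (adE x w)) = (adE x ^ (j + (m + 1))) w := by
          rw [← Module.End.mul_apply, ← pow_add]
          rw [← Module.End.mul_apply, ← pow_succ]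
          have e : m + j + 1 = j + (m + 1) := by omega
          rw [e]
        rw [hz, pow_add, Module.End.mul_apply, hw, map_zero, zero_mul]
      have := ih _ hTm
      rw [pow_succ, Module.End.mul_apply]
      exact this

end WeylMain

open WeylAux WeylAux2 WeylAux3 WeylAux4 WeylAux5 WeylAux6 WeylMain

/-- Claim at the end of Section 3. -/
theorem aeval_mem_Delta2_and_unsolvable (f : Polynomial F) (hf : 1 < f.natDegree)
    (x : WeylAlgebra F) (hx : x ∈ Delta2 F) :
    Polynomial.aeval x f ∈ Delta2 F ∧ ¬ Solvable F (Polynomial.aeval x f) := by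
  classical
  obtain ⟨hx1, hx2, hx3, hx4⟩ := hx
  have hx0 : x ≠ 0 := by
    intro h
    exact hx1 ⟨0, by rw [map_zero, h]⟩
  have hr : 1 ≤ v x := by
    by_contra h
    have h0 : v x ≤ 0 := by omega
    obtain ⟨c, hc⟩ := scalar_of_mem_Ale_zero (v_le_iff.mp h0)
    exact hx1 ⟨c, hc.symm⟩
  have hg : 2 ≤ f.natDegree := hf
  have hf0 : f ≠ 0 := fun h => by rw [h] at hf; simp at hf
  have NsetEq : Nset F (Polynomial.aeval x f) = Nset F x := by
    ext w
    simp only [Nset, Set.mem_setOf_eq]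
    constructor
    · rintro ⟨n, hn1, hn⟩
      rw [adE_iterate] at hn
      obtain ⟨k, hk⟩ := N_sub hx0 hr hg n w hn
      refine ⟨k + 1, by omega, ?_⟩
      rw [adE_iterate, pow_succ', Module.End.mul_apply, hk, map_zero]
    · rintro ⟨n, hn1, hn⟩
      rw [adE_iterate] at hn
      refine ⟨n, hn1, ?_⟩
      rw [adE_iterate]
      exact N_sup hg n w hn
  have CsetEq : Cset F (Polynomial.aeval x f) = Cset F x := by
    ext w
    simp only [Cset, Set.mem_setOf_eq]
    exact ⟨fun h => cent_sub hx0 hr hg h, fun h => cent_sup h⟩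
  have hXr : Polynomial.aeval x f ∉ Set.range (algebraMap F (WeylAlgebra F)) := by
    rintro ⟨c, hc⟩
    obtain ⟨hne, hv⟩ := v_aeval hx0 hr hf0
    rw [← hc, v_algebraMap] at hv
    have h2 : 1 ≤ f.natDegree * v x := by
      calc 1 = 1 * 1 := (one_mul 1).symm
        _ ≤ f.natDegree * v x := Nat.mul_le_mul (by omega) hr
    omega
  refine ⟨⟨hXr, ?_, ?_, ?_⟩, ?_⟩
  · rw [NsetEq]; exact hx2
  · rw [NsetEq, CsetEq]; exact hx3
  · ext w
    simp only [Dset, Cset, Set.mem_setOf_eq]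
    constructor
    · rintro ⟨c, hc⟩
      by_cases h0 : c = 0
      · rw [h0, zero_smul] at hc; exact hc
      · have hw0 := eigen_zero hx0 hr hg h0 hc
        rw [hw0]
        simp
    · intro h
      exact ⟨0, by rw [zero_smul]; exact h⟩
  · rintro ⟨y, hy⟩
    exact not_solvable_core hx0 hr hg ⟨y, hy⟩
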